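/- Let I ⊆ ℝ be an open interval, let ζ, B, R : ℝ → ℝ be twice continuously differentiable on I with ζ(r) ≠ 0, R(r) ≠ 0 and (R·ζ)'(r) = R'(r)ζ(r) + R(r)ζ'(r) ≠ 0 for all r ∈ I, and suppose (ζ, B, R) satisfies the general diagonal isotropy ODE on I. Fix r₀ ∈ I, λ ∈ ℝ, and define Δ : I → ℝ by Δ(r) = λ · (R(r)ζ(r)/(R'(r)ζ(r)+R(r)ζ'(r)))² · exp( 2 ∫_{r₀}^{r} (ζ'(s)/ζ(s)) · (R'(s)ζ(s) − R(s)ζ'(s))/(R'(s)ζ(s) + R(s)ζ'(s)) ds ). Then (ζ, B + Δ, R) also satisfies the general diagonal isotropy ODE on I. -/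

import Mathlib

set_option maxHeartbeats 1000000 in
theorem gd_key (Rr R' R'' z z' z'' E lam : ℝ) (hv : R' * z + Rr * z' ≠ 0) (hz : z ≠ 0) :
    Rr * (R' * z + Rr * z') *
        (lam * (2 * (Rr * z / (R' * z + Rr * z')) ^ 1 *
            (((R' * z + Rr * z') * (R' * z + Rr * z')
              - Rr * z * ((R'' * z + R' * z') + (R' * z' + Rr * z'')))
              / (R' * z + Rr * z') ^ 2)) * E
          + lam * (Rr * z / (R' * z + Rr * z')) ^ 2 *
            (E * (2 * (z' / z * ((R' * z - Rr * z') / (R' * z + Rr * z'))))))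
      + 2 * (Rr * R'' * z + Rr ^ 2 * z'' - Rr * R' * z' - R' ^ 2 * z) *
          (lam * (Rr * z / (R' * z + Rr * z')) ^ 2 * E) = 0 := by
  field_simp
  ring

/-- **General diagonal 1.**  If `(ζ, B, R)` satisfies the general diagonal pressure-isotropy
ODE on an open interval, then so does `(ζ, B + Δ, R)`, where
`Δ(r) = λ (Rζ/(Rζ)')² exp(2 ∫ (ζ'/ζ)·(R'ζ − Rζ')/(R'ζ + Rζ'))`. -/
theorem general_diagonal_one
    (a b : ℝ) (ζ B R : ℝ → ℝ)
    (hζ : ContDiffOn ℝ 2 ζ (Set.Ioo a b))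
    (hB : ContDiffOn ℝ 2 B (Set.Ioo a b))
    (hR : ContDiffOn ℝ 2 R (Set.Ioo a b))
    (hζ0 : ∀ r ∈ Set.Ioo a b, ζ r ≠ 0)
    (hR0 : ∀ r ∈ Set.Ioo a b, R r ≠ 0)
    (hRζ0 : ∀ r ∈ Set.Ioo a b, deriv R r * ζ r + R r * deriv ζ r ≠ 0)
    (hODE : ∀ r ∈ Set.Ioo a b,
      R r * (deriv R r * ζ r + R r * deriv ζ r) * deriv B r
        + 2 * (R r * deriv (deriv R) r * ζ r + (R r) ^ 2 * deriv (deriv ζ) r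
            - R r * deriv R r * deriv ζ r - (deriv R r) ^ 2 * ζ r) * B r
        + 2 * ζ r = 0)
    (r₀ : ℝ) (hr₀ : r₀ ∈ Set.Ioo a b) (lam : ℝ) (Δ : ℝ → ℝ)
    (hΔ : ∀ r ∈ Set.Ioo a b,
      Δ r = lam * (R r * ζ r / (deriv R r * ζ r + R r * deriv ζ r)) ^ 2 *
        Real.exp (2 * ∫ s in r₀..r,
          (deriv ζ s / ζ s) *
            ((deriv R s * ζ s - R s * deriv ζ s) / (deriv R s * ζ s + R s * deriv ζ s)))) :
    ∀ r ∈ Set.Ioo a b,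
      R r * (deriv R r * ζ r + R r * deriv ζ r) * deriv (fun x => B x + Δ x) r
        + 2 * (R r * deriv (deriv R) r * ζ r + (R r) ^ 2 * deriv (deriv ζ) r
            - R r * deriv R r * deriv ζ r - (deriv R r) ^ 2 * ζ r) * (B r + Δ r)
        + 2 * ζ r = 0 := by
  intro r hr
  have hso : IsOpen (Set.Ioo a b) := isOpen_Ioo
  have hmem : Set.Ioo a b ∈ nhds r := hso.mem_nhds hr
  set g : ℝ → ℝ := fun s =>
    (deriv ζ s / ζ s) *
      ((deriv R s * ζ s - R s * deriv ζ s) / (deriv R s * ζ s + R s * deriv ζ s)) with hg_def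
  -- C¹ data for the derivatives
  have hζ1 : ContDiffOn ℝ 1 (deriv ζ) (Set.Ioo a b) :=
    hζ.deriv_of_isOpen hso (by norm_num)
  have hR1 : ContDiffOn ℝ 1 (deriv R) (Set.Ioo a b) :=
    hR.deriv_of_isOpen hso (by norm_num)
  -- continuity of g on Ioo
  have hgcont : ContinuousOn g (Set.Ioo a b) := by
    apply ContinuousOn.mul
    · exact (hζ1.continuousOn.div hζ.continuousOn hζ0)
    · exact ContinuousOn.div
        ((hR1.continuousOn.mul hζ.continuousOn).sub
          (hR.continuousOn.mul hζ1.continuousOn))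
        ((hR1.continuousOn.mul hζ.continuousOn).add
          (hR.continuousOn.mul hζ1.continuousOn)) hRζ0
  -- FTC: derivative of the integral
  have hint : IntervalIntegrable g MeasureTheory.volume r₀ r :=
    (hgcont.mono (Set.ordConnected_Ioo.uIcc_subset hr₀ hr)).intervalIntegrable
  have hmeas : StronglyMeasurableAtFilter g (nhds r) MeasureTheory.volume :=
    hgcont.stronglyMeasurableAtFilter hso r hr
  have hI : HasDerivAt (fun x => ∫ s in r₀..x, g s) (g r) r :=
    intervalIntegral.integral_hasDerivAt_right hint hmeas (hgcont.continuousAt hmem)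
  -- derivatives of the basic functions at r
  have hζd : HasDerivAt ζ (deriv ζ r) r :=
    ((hζ.differentiableOn two_ne_zero).differentiableAt hmem).hasDerivAt
  have hRd : HasDerivAt R (deriv R r) r :=
    ((hR.differentiableOn two_ne_zero).differentiableAt hmem).hasDerivAt
  have hζd2 : HasDerivAt (deriv ζ) (deriv (deriv ζ) r) r :=
    ((hζ1.differentiableOn one_ne_zero).differentiableAt hmem).hasDerivAt
  have hRd2 : HasDerivAt (deriv R) (deriv (deriv R) r) r :=
    ((hR1.differentiableOn one_ne_zero).differentiableAt hmem).hasDerivAt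
  have hBd : HasDerivAt B (deriv B r) r :=
    ((hB.differentiableOn two_ne_zero).differentiableAt hmem).hasDerivAt
  -- u = Rζ, v = (Rζ)'
  have hu : HasDerivAt (fun x => R x * ζ x)
      (deriv R r * ζ r + R r * deriv ζ r) r := hRd.mul hζd
  have hv : HasDerivAt (fun x => deriv R x * ζ x + R x * deriv ζ x)
      ((deriv (deriv R) r * ζ r + deriv R r * deriv ζ r)
        + (deriv R r * deriv ζ r + R r * deriv (deriv ζ) r)) r :=
    (hRd2.mul hζd).add (hRd.mul hζd2)
  have hv0 : deriv R r * ζ r + R r * deriv ζ r ≠ 0 := hRζ0 r hr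
  -- quotient and its square
  have hquot : HasDerivAt (fun x => R x * ζ x / (deriv R x * ζ x + R x * deriv ζ x))
      (((deriv R r * ζ r + R r * deriv ζ r) * (deriv R r * ζ r + R r * deriv ζ r)
        - R r * ζ r * ((deriv (deriv R) r * ζ r + deriv R r * deriv ζ r)
          + (deriv R r * deriv ζ r + R r * deriv (deriv ζ) r)))
        / (deriv R r * ζ r + R r * deriv ζ r) ^ 2) r := hu.div hv hv0
  have hq : HasDerivAt
      (fun x => (R x * ζ x / (deriv R x * ζ x + R x * deriv ζ x)) ^ 2)
      (2 * (R r * ζ r / (deriv R r * ζ r + R r * deriv ζ r)) ^ 1 *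
        (((deriv R r * ζ r + R r * deriv ζ r) * (deriv R r * ζ r + R r * deriv ζ r)
          - R r * ζ r * ((deriv (deriv R) r * ζ r + deriv R r * deriv ζ r)
            + (deriv R r * deriv ζ r + R r * deriv (deriv ζ) r)))
          / (deriv R r * ζ r + R r * deriv ζ r) ^ 2)) r := by
    simpa using hquot.fun_pow 2
  -- exponential factor
  have hE : HasDerivAt (fun x => Real.exp (2 * ∫ s in r₀..x, g s))
      (Real.exp (2 * ∫ s in r₀..r, g s) * (2 * g r)) r := by
    simpa [mul_comm] using (hI.const_mul 2).exp
  -- full formula F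
  have hF : HasDerivAt
      (fun x => lam * (R x * ζ x / (deriv R x * ζ x + R x * deriv ζ x)) ^ 2 *
        Real.exp (2 * ∫ s in r₀..x, g s))
      (lam * (2 * (R r * ζ r / (deriv R r * ζ r + R r * deriv ζ r)) ^ 1 *
        (((deriv R r * ζ r + R r * deriv ζ r) * (deriv R r * ζ r + R r * deriv ζ r)
          - R r * ζ r * ((deriv (deriv R) r * ζ r + deriv R r * deriv ζ r)
            + (deriv R r * deriv ζ r + R r * deriv (deriv ζ) r)))
          / (deriv R r * ζ r + R r * deriv ζ r) ^ 2))
        * Real.exp (2 * ∫ s in r₀..r, g s)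
        + lam * (R r * ζ r / (deriv R r * ζ r + R r * deriv ζ r)) ^ 2 *
          (Real.exp (2 * ∫ s in r₀..r, g s) * (2 * g r))) r := (hq.const_mul lam).mul hE
  -- Δ agrees with the formula near r
  have hΔeq : Δ =ᶠ[nhds r]
      (fun x => lam * (R x * ζ x / (deriv R x * ζ x + R x * deriv ζ x)) ^ 2 *
        Real.exp (2 * ∫ s in r₀..x, g s)) :=
    Filter.eventuallyEq_of_mem hmem fun x hx => hΔ x hx
  have hΔd : HasDerivAt Δ
      (lam * (2 * (R r * ζ r / (deriv R r * ζ r + R r * deriv ζ r)) ^ 1 *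
        (((deriv R r * ζ r + R r * deriv ζ r) * (deriv R r * ζ r + R r * deriv ζ r)
          - R r * ζ r * ((deriv (deriv R) r * ζ r + deriv R r * deriv ζ r)
            + (deriv R r * deriv ζ r + R r * deriv (deriv ζ) r)))
          / (deriv R r * ζ r + R r * deriv ζ r) ^ 2))
        * Real.exp (2 * ∫ s in r₀..r, g s)
        + lam * (R r * ζ r / (deriv R r * ζ r + R r * deriv ζ r)) ^ 2 *
          (Real.exp (2 * ∫ s in r₀..r, g s) * (2 * g r))) r :=
    hF.congr_of_eventuallyEq hΔeq
  have hsum : deriv (fun x => B x + Δ x) r = deriv B r + _ := (hBd.add hΔd).deriv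
  rw [hsum, hΔ r hr]
  have hODEr := hODE r hr
  have hζ0r := hζ0 r hr
  simp only [hg_def]
  linear_combination hODEr + gd_key (R r) (deriv R r) (deriv (deriv R) r) (ζ r)
    (deriv ζ r) (deriv (deriv ζ) r)
    (Real.exp (2 * ∫ s in r₀..r, deriv ζ s / ζ s *
      ((deriv R s * ζ s - R s * deriv ζ s) / (deriv R s * ζ s + R s * deriv ζ s))))
    lam hv0 hζ0r
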